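/- arXiv:2004.04550 — 4 statements merged into one kernel-verified Lean document; each statement's English description precedes it below -/
import Mathlib

section
/- Fix integers l ≥ 1 and k with |k| > 1, and let G_P be the presented group with generators a₁, …, a_l, t and relators t aᵢ t⁻¹ aᵢ^{−k} for 1 ≤ i ≤ l together with the word a₁ a₂ ⋯ a_l. Then for every natural number n, the relation a₁^{kⁿ} a₂^{kⁿ} ⋯ a_l^{kⁿ} = 1 holds in G_P, where aᵢ denotes the image of the i-th generator in G_P. -/
/-- The free-group generator corresponding to `aᵢ`. -/
def aGen (l : ℕ) (i : Fin l) : FreeGroup (Fin l ⊕ Unit) := FreeGroup.of (Sum.inl i)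

/-- The free-group generator corresponding to the stable letter `t`. -/
def tGen (l : ℕ) : FreeGroup (Fin l ⊕ Unit) := FreeGroup.of (Sum.inr ())

/-- The relators `t aᵢ t⁻¹ aᵢ^{-k}` for `1 ≤ i ≤ l`, together with `a₁ a₂ ⋯ a_l`. -/
def relsGP (l : ℕ) (k : ℤ) : Set (FreeGroup (Fin l ⊕ Unit)) :=
  {r | (∃ i : Fin l, r = tGen l * aGen l i * (tGen l)⁻¹ * (aGen l i) ^ (-k)) ∨
    r = (List.ofFn fun i : Fin l => aGen l i).prod}

/-- The group `G_P` presented with generators `a₁, …, a_l, t` and relators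
`t aᵢ t⁻¹ aᵢ^{-k}` (`1 ≤ i ≤ l`) and `a₁ a₂ ⋯ a_l`. -/
abbrev GP (l : ℕ) (k : ℤ) := PresentedGroup (relsGP l k)

lemma mk_rel_eq_one {l : ℕ} {k : ℤ} {r : FreeGroup (Fin l ⊕ Unit)} (hr : r ∈ relsGP l k) :
    PresentedGroup.mk (relsGP l k) r = 1 :=
  (QuotientGroup.eq_one_iff _).mpr (Subgroup.subset_normalClosure hr)

lemma conj_of_eq {l : ℕ} {k : ℤ} (i : Fin l) :
    (PresentedGroup.of (rels := relsGP l k) (Sum.inr ())) *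
      (PresentedGroup.of (rels := relsGP l k) (Sum.inl i)) *
      (PresentedGroup.of (rels := relsGP l k) (Sum.inr ()))⁻¹ =
    (PresentedGroup.of (rels := relsGP l k) (Sum.inl i)) ^ k := by
  have h := mk_rel_eq_one (l := l) (k := k)
    (Or.inl ⟨i, rfl⟩ : tGen l * aGen l i * (tGen l)⁻¹ * (aGen l i) ^ (-k) ∈ relsGP l k)
  simp only [map_mul, map_inv, map_zpow] at h
  have h' : (PresentedGroup.mk (relsGP l k) (tGen l)) *
      (PresentedGroup.mk (relsGP l k) (aGen l i)) *
      (PresentedGroup.mk (relsGP l k) (tGen l))⁻¹ *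
      ((PresentedGroup.mk (relsGP l k) (aGen l i)) ^ k)⁻¹ = 1 := by
    rw [← zpow_neg]; exact h
  have := mul_inv_eq_one.mp h'
  exact this

/-- In `G_P`, the relation `a₁^{kⁿ} a₂^{kⁿ} ⋯ a_l^{kⁿ} = 1` holds for every natural `n`. -/
theorem GP_prod_pow_eq_one (l : ℕ) (hl : 1 ≤ l) (k : ℤ) (hk : 1 < |k|) (n : ℕ) :
    (List.ofFn fun i : Fin l =>
      (PresentedGroup.of (rels := relsGP l k) (Sum.inl i)) ^ (k ^ n)).prod = 1 := by
  set A : Fin l → GP l k := fun i => PresentedGroup.of (rels := relsGP l k) (Sum.inl i) with hA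
  set T : GP l k := PresentedGroup.of (rels := relsGP l k) (Sum.inr ()) with hT
  induction n with
  | zero =>
    simp only [pow_zero, zpow_one]
    have h := mk_rel_eq_one (l := l) (k := k)
      (Or.inr rfl : (List.ofFn fun i : Fin l => aGen l i).prod ∈ relsGP l k)
    rw [map_list_prod, List.map_ofFn] at h
    exact h
  | succ n ih =>
    have key : ∀ i : Fin l, A i ^ (k ^ (n + 1)) = (MulAut.conj T) (A i ^ (k ^ n)) := by
      intro i
      rw [map_zpow, MulAut.conj_apply, conj_of_eq i, ← zpow_mul, ← pow_succ']
    calc (List.ofFn fun i : Fin l => A i ^ (k ^ (n + 1))).prod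
        = (List.ofFn fun i : Fin l => (MulAut.conj T) (A i ^ (k ^ n))).prod := by
          simp only [key]
      _ = ((List.ofFn fun i : Fin l => A i ^ (k ^ n)).map (MulAut.conj T)).prod := by
          rw [List.map_ofFn]; rfl
      _ = (MulAut.conj T) (List.ofFn fun i : Fin l => A i ^ (k ^ n)).prod := by
          rw [← map_list_prod]
      _ = 1 := by rw [ih, map_one]
end

section
/- Fix integers l ≥ 1 and k with |k| > 1. Let H_P be the presented group with generators a₁, …, a_l and relators the words a₁^{kⁿ} a₂^{kⁿ} ⋯ a_l^{kⁿ} for every natural number n, and let G_P be the presented group with generators a₁, …, a_l, t and relators t aᵢ t⁻¹ aᵢ^{−k} for 1 ≤ i ≤ l together with the word a₁ a₂ ⋯ a_l. Then there exists a group homomorphism ψ : H_P → G_P sending the image of the i-th generator of H_P to the image of the i-th generator aᵢ of G_P, for every i with 1 ≤ i ≤ l. -/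
/-- The relators `a₁^{kⁿ} a₂^{kⁿ} ⋯ a_l^{kⁿ}` for all natural numbers `n`. -/
def relsHP (l : ℕ) (k : ℤ) : Set (FreeGroup (Fin l)) :=
  {r | ∃ n : ℕ, r = (List.ofFn fun i : Fin l => (FreeGroup.of i) ^ (k ^ n)).prod}

/-- The group `H_P` presented with generators `a₁, …, a_l` and relators
`a₁^{kⁿ} a₂^{kⁿ} ⋯ a_l^{kⁿ}` for all natural numbers `n`. -/
abbrev HP (l : ℕ) (k : ℤ) := PresentedGroup (relsHP l k)

namespace HPtoGPaux

variable (l : ℕ) (k : ℤ)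

/-- Image of `aᵢ` in `G_P`. -/
noncomputable def A (i : Fin l) : GP l k := PresentedGroup.of (rels := relsGP l k) (Sum.inl i)

/-- Image of `t` in `G_P`. -/
noncomputable def T : GP l k := PresentedGroup.of (rels := relsGP l k) (Sum.inr ())

lemma mk_rel_one {r : FreeGroup (Fin l ⊕ Unit)} (hr : r ∈ relsGP l k) :
    PresentedGroup.mk (relsGP l k) r = 1 := by
  have : r ∈ Subgroup.normalClosure (relsGP l k) := Subgroup.subset_normalClosure hr
  exact (QuotientGroup.eq_one_iff r).mpr this

lemma conj_A (i : Fin l) : T l k * A l k i * (T l k)⁻¹ = (A l k i) ^ k := by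
  have h := mk_rel_one l k (Or.inl ⟨i, rfl⟩)
  have h2 : T l k * A l k i * (T l k)⁻¹ * (A l k i) ^ (-k) = 1 := by
    simpa [A, T, PresentedGroup.of, tGen, aGen, map_mul, map_inv, map_zpow] using h
  have := mul_eq_one_iff_eq_inv.mp h2
  rw [this, ← zpow_neg, neg_neg]

lemma prod_A_one : (List.ofFn fun i : Fin l => A l k i).prod = 1 := by
  have h := mk_rel_one l k (Or.inr rfl)
  rw [map_list_prod] at h
  simpa [A, PresentedGroup.of, aGen, Function.comp_def] using h

lemma prod_A_pow_one (n : ℕ) :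
    (List.ofFn fun i : Fin l => (A l k i) ^ (k ^ n)).prod = 1 := by
  induction n with
  | zero => simpa using prod_A_one l k
  | succ n ih =>
    have key : ∀ i : Fin l,
        (MulAut.conj (T l k)) ((A l k i) ^ (k ^ n)) = (A l k i) ^ (k ^ (n + 1)) := by
      intro i
      rw [map_zpow]
      have : (MulAut.conj (T l k)) (A l k i) = (A l k i) ^ k := by
        simpa [MulAut.conj_apply] using conj_A l k i
      rw [this, ← zpow_mul, ← pow_succ']
    calc (List.ofFn fun i : Fin l => (A l k i) ^ (k ^ (n + 1))).prod
        = (List.ofFn fun i : Fin l =>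
            (MulAut.conj (T l k)) ((A l k i) ^ (k ^ n))).prod := by
          simp only [key]
      _ = (MulAut.conj (T l k)) (List.ofFn fun i : Fin l => (A l k i) ^ (k ^ n)).prod := by
          rw [show (fun i : Fin l => (MulAut.conj (T l k)) ((A l k i) ^ (k ^ n)))
              = (((MulAut.conj (T l k)) : GP l k →* GP l k) ∘
                  fun i : Fin l => (A l k i) ^ (k ^ n)) from rfl,
            ← List.map_ofFn, map_list_prod]
          rfl
      _ = 1 := by rw [ih, map_one]

end HPtoGPaux

/-- There is a homomorphism `ψ : H_P → G_P` sending the image of the `i`-th generator of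
`H_P` to the image of the generator `aᵢ` of `G_P`, for every `i`. -/
theorem HP_to_GP_exists_hom (l : ℕ) (hl : 1 ≤ l) (k : ℤ) (hk : 1 < |k|) :
    ∃ ψ : HP l k →* GP l k, ∀ i : Fin l,
      ψ (PresentedGroup.of (rels := relsHP l k) i) =
        PresentedGroup.of (rels := relsGP l k) (Sum.inl i) := by
  have h : ∀ r ∈ relsHP l k,
      FreeGroup.lift (fun i : Fin l => HPtoGPaux.A l k i) r = 1 := by
    rintro r ⟨n, rfl⟩
    rw [map_list_prod]
    have : (List.map (FreeGroup.lift fun i : Fin l => HPtoGPaux.A l k i)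
        (List.ofFn fun i : Fin l => (FreeGroup.of i) ^ (k ^ n)))
        = List.ofFn fun i : Fin l => (HPtoGPaux.A l k i) ^ (k ^ n) := by
      simp [List.map_ofFn, Function.comp_def]
    rw [this]
    exact HPtoGPaux.prod_A_pow_one l k n
  exact ⟨PresentedGroup.toGroup h, fun i => PresentedGroup.toGroup.of h⟩
end

section
/- Let q be a prime power and let F be a finite field with q elements. Then PGL₂(F) contains an element of order q − 1 and an element of order q + 1. -/
open Matrix Polynomial

lemma GL2_mem_center_iff {F : Type*} [Field F] (M : GL (Fin 2) F) :
    M ∈ Subgroup.center (GL (Fin 2) F) ↔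
      ∃ c : F, (M : Matrix (Fin 2) (Fin 2) F) = Matrix.scalar (Fin 2) c := by
  constructor
  · intro hM
    have h : ∀ t : TransvectionStruct (Fin 2) F,
        Commute t.toMatrix (M : Matrix (Fin 2) (Fin 2) F) := by
      intro t
      have := Subgroup.mem_center_iff.mp hM
        ⟨t.toMatrix, t.inv.toMatrix, t.mul_inv, t.inv_mul⟩
      exact congrArg Units.val this
    obtain ⟨c, hc⟩ := Matrix.mem_range_scalar_of_commute_transvectionStruct h
    exact ⟨c, hc.symm⟩
  · rintro ⟨c, hc⟩
    refine Subgroup.mem_center_iff.mpr fun g => ?_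
    have : (g : Matrix (Fin 2) (Fin 2) F) * M = (M : Matrix (Fin 2) (Fin 2) F) * g := by
      rw [hc]
      exact (Matrix.scalar_commute c (fun r => mul_comm c r)
        (g : Matrix (Fin 2) (Fin 2) F)).symm
    exact Units.ext this

lemma exists_irreducible_quadratic (F : Type*) [Field F] [Fintype F] :
    ∃ f : F[X], Irreducible f ∧ f.Monic ∧ f.natDegree = 2 := by
  classical
  set b : F := if (1 : F) = -1 then 1 else 0 with hb
  have hni : ¬ Function.Injective (fun x : F => x ^ 2 + b * x) := by
    by_cases h1 : (1 : F) = -1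
    · intro h
      have h01 : (0 : F) ^ 2 + b * 0 = 1 ^ 2 + b * 1 := by
        rw [hb, if_pos h1]; ring_nf; linear_combination -h1
      exact zero_ne_one (h h01)
    · intro h
      have h01 : (1 : F) ^ 2 + b * 1 = (-1) ^ 2 + b * (-1) := by
        rw [hb, if_neg h1]; ring
      exact h1 (h h01)
  have hns : ¬ Function.Surjective (fun x : F => x ^ 2 + b * x) := by
    rw [← Finite.injective_iff_surjective]; exact hni
  rw [Function.Surjective] at hns
  push_neg at hns
  obtain ⟨v, hv⟩ := hns
  have hm : (X ^ 2 + C b * X + C (-v) : F[X]).Monic := by monicity!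
  have hd : (X ^ 2 + C b * X + C (-v) : F[X]).natDegree = 2 := by compute_degree!
  refine ⟨X ^ 2 + C b * X + C (-v), ?_, hm, hd⟩
  rw [hm.irreducible_iff_roots_eq_zero_of_degree_le_three (by rw [hd]) (by rw [hd]; norm_num)]
  rw [Multiset.eq_zero_iff_forall_notMem]
  intro x hx
  rw [mem_roots hm.ne_zero] at hx
  have h2 := hx
  simp only [IsRoot, eval_add, eval_pow, eval_X, eval_mul, eval_C] at h2
  exact hv x (by linear_combination h2)

lemma part1 (q : ℕ) (hq : IsPrimePow q) (F : Type*) [Field F] [Fintype F]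
    (hF : Fintype.card F = q) :
    ∃ x : GL (Fin 2) F ⧸ Subgroup.center (GL (Fin 2) F), orderOf x = q - 1 := by
  classical
  have hq2 : 2 ≤ q := hq.two_le
  obtain ⟨a, ha⟩ := IsCyclic.exists_generator (α := Fˣ)
  have haord : orderOf a = q - 1 := by
    rw [orderOf_eq_card_of_forall_mem_zpowers ha, Nat.card_eq_fintype_card,
      Fintype.card_units, hF]
  have hvec : ∀ u v : Fˣ, (![(u : F), 1] * ![(v : F), 1]) = ![((u * v : Fˣ) : F), 1] := by
    intro u v; funext i; fin_cases i <;> simp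
  have hone : (![((1 : Fˣ) : F), 1]) = (1 : Fin 2 → F) := by
    funext i; fin_cases i <;> simp
  have hmul : ∀ u v : Fˣ,
      diagonal ![(u : F), 1] * diagonal ![(v : F), 1] = diagonal ![((u*v : Fˣ) : F), 1] := by
    intro u v; rw [diagonal_mul_diagonal]; exact congrArg diagonal (hvec u v)
  have hone' : ∀ u : Fˣ, u = 1 → diagonal ![(u : F), 1] = 1 := by
    intro u hu; rw [hu, hone]; exact diagonal_one
  set M : GL (Fin 2) F := ⟨diagonal ![(a : F), 1], diagonal ![((a⁻¹ : Fˣ) : F), 1],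
    by rw [hmul]; exact hone' _ (mul_inv_cancel a),
    by rw [hmul]; exact hone' _ (inv_mul_cancel a)⟩ with hM
  have hMpow : ∀ k : ℕ, ((M ^ k : GL (Fin 2) F) : Matrix (Fin 2) (Fin 2) F)
      = diagonal ![((a ^ k : Fˣ) : F), 1] := by
    intro k
    induction k with
    | zero => rw [pow_zero, pow_zero, Units.val_one]; exact (hone' _ rfl).symm
    | succ k ih => rw [pow_succ, Units.val_mul, ih, hM, hmul, ← pow_succ]
  refine ⟨QuotientGroup.mk M, ?_⟩
  have hpow1 : (QuotientGroup.mk M : GL (Fin 2) F ⧸ Subgroup.center (GL (Fin 2) F)) ^ (q - 1)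
      = 1 := by
    rw [← QuotientGroup.mk_pow, QuotientGroup.eq_one_iff, GL2_mem_center_iff]
    refine ⟨1, ?_⟩
    have h1 : a ^ (q - 1) = 1 := by rw [← haord]; exact pow_orderOf_eq_one a
    rw [hMpow, hone' _ h1]
    exact (_root_.map_one _).symm
  have hdvd : q - 1 ∣ orderOf (QuotientGroup.mk M :
      GL (Fin 2) F ⧸ Subgroup.center (GL (Fin 2) F)) := by
    set k := orderOf (QuotientGroup.mk M : GL (Fin 2) F ⧸ Subgroup.center (GL (Fin 2) F))
    have hk1 : (QuotientGroup.mk M : GL (Fin 2) F ⧸ Subgroup.center (GL (Fin 2) F)) ^ k = 1 :=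
      pow_orderOf_eq_one _
    rw [← QuotientGroup.mk_pow, QuotientGroup.eq_one_iff] at hk1
    have hk := hk1
    obtain ⟨c, hc⟩ := (GL2_mem_center_iff _).mp hk
    rw [hMpow] at hc
    have h11 : (1 : F) = c := by
      have := congrFun (congrFun hc 1) 1
      simpa [Matrix.scalar_apply] using this
    have h00 : ((a ^ k : Fˣ) : F) = c := by
      have := congrFun (congrFun hc 0) 0
      simpa [Matrix.scalar_apply] using this
    have : a ^ k = 1 := Units.ext (by rw [h00, ← h11]; rfl)
    rw [← haord]
    exact orderOf_dvd_of_pow_eq_one this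
  exact Nat.dvd_antisymm (orderOf_dvd_of_pow_eq_one hpow1) hdvd

lemma part2 (q : ℕ) (hq : IsPrimePow q) (F : Type*) [Field F] [Fintype F]
    (hF : Fintype.card F = q) :
    ∃ y : GL (Fin 2) F ⧸ Subgroup.center (GL (Fin 2) F), orderOf y = q + 1 := by
  classical
  have hq2 : 2 ≤ q := hq.two_le
  obtain ⟨f, hirr, hmon, hdeg⟩ := exists_irreducible_quadratic F
  haveI : Fact (Irreducible f) := ⟨hirr⟩
  set E := AdjoinRoot f with hE
  let pb : PowerBasis F E := AdjoinRoot.powerBasis hirr.ne_zero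
  have hdim : pb.dim = 2 := by
    show (AdjoinRoot.powerBasis hirr.ne_zero).dim = 2
    rw [AdjoinRoot.powerBasis_dim, hdeg]
  let bE : Module.Basis (Fin 2) F E := pb.basis.reindex (finCongr hdim)
  letI : Fintype E := Module.fintypeOfFintype bE
  have hcardE : Fintype.card E = q ^ 2 := by
    rw [Module.card_fintype bE, hF, Fintype.card_fin]
  -- the algebra embedding into matrices
  set φ : E →ₐ[F] Matrix (Fin 2) (Fin 2) F := Algebra.leftMulMatrix bE with hφ
  have hφinj : Function.Injective φ := Algebra.leftMulMatrix_injective bE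
  set Φ : Eˣ →* GL (Fin 2) F := Units.map (φ : E →* Matrix (Fin 2) (Fin 2) F) with hΦ
  -- scalar matrices are the image of F
  have hscal : ∀ c : F, φ (algebraMap F E c) = Matrix.scalar (Fin 2) c := by
    intro c
    rw [AlgHom.commutes]
    ext i j
    simp [Matrix.algebraMap_matrix_apply, Matrix.scalar_apply, Matrix.diagonal_apply]
  have hker : ∀ α : Eˣ, Φ α ∈ Subgroup.center (GL (Fin 2) F) ↔
      ∃ c : Fˣ, Units.map (algebraMap F E : F →+* E).toMonoidHom c = α := by
    intro α
    rw [GL2_mem_center_iff]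
    constructor
    · rintro ⟨c, hc⟩
      have hval : (α : E) = algebraMap F E c := by
        apply hφinj
        rw [hscal]
        exact hc
      have hc0 : c ≠ 0 := by
        intro h
        rw [h, map_zero] at hval
        exact α.ne_zero hval
      exact ⟨Units.mk0 c hc0, Units.ext (by simp [hval])⟩
    · rintro ⟨c, hc⟩
      refine ⟨c, ?_⟩
      rw [← hc]
      show φ ((Units.map (algebraMap F E : F →+* E).toMonoidHom c : Eˣ) : E) = _
      simp only [Units.coe_map, RingHom.toMonoidHom_eq_coe, MonoidHom.coe_coe]
      exact hscal c
  -- a generator of Eˣ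
  obtain ⟨ζ, hζ⟩ := IsCyclic.exists_generator (α := Eˣ)
  have hζord : orderOf ζ = q ^ 2 - 1 := by
    rw [orderOf_eq_card_of_forall_mem_zpowers hζ, Nat.card_eq_fintype_card,
      Fintype.card_units, hcardE]
  have hqq : (q + 1) * (q - 1) = q ^ 2 - 1 := by
    have := Nat.sq_sub_sq q 1
    simpa [pow_two] using this.symm
  have hq1pos : 0 < q - 1 := by omega
  -- counting: the (q-1)-st roots of unity in Eˣ are exactly the image of Fˣ
  have hcardU : Fintype.card Fˣ = q - 1 := by rw [Fintype.card_units, hF]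
  set ι : Fˣ →* Eˣ := Units.map (algebraMap F E : F →+* E).toMonoidHom with hι
  have hιinj : Function.Injective ι := Units.map_injective (algebraMap F E).injective
  have hsol : ∀ g : Eˣ, g ^ (q - 1) = 1 → ∃ c : Fˣ, ι c = g := by
    intro g hg
    set S : Finset Eˣ := Finset.univ.filter (fun g => g ^ (q - 1) = 1) with hS
    set T : Finset Eˣ := Finset.univ.image ι with hT
    have hTS : T ⊆ S := by
      intro x hx
      rw [hT, Finset.mem_image] at hx
      obtain ⟨c, _, rfl⟩ := hx
      rw [hS, Finset.mem_filter]
      refine ⟨Finset.mem_univ _, ?_⟩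
      rw [← map_pow]
      have : c ^ (q - 1) = 1 := by rw [← hcardU]; exact pow_card_eq_one
      rw [this, _root_.map_one]
    have hScard : S.card ≤ q - 1 := by
      calc S.card ≤ Multiset.card (nthRoots (q - 1) ((Units.coeHom E) 1)) :=
            card_nthRoots_subgroup_units (Units.coeHom E) (fun _ _ h => Units.ext h) hq1pos 1
        _ ≤ q - 1 := by rw [_root_.map_one]; exact Polynomial.card_nthRoots _ _
    have hTcard : T.card = q - 1 := by
      rw [hT, Finset.card_image_of_injective _ hιinj, Finset.card_univ, hcardU]
    have hST : T = S := Finset.eq_of_subset_of_card_le hTS (le_trans hScard hTcard.ge)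
    have hgS : g ∈ S := by rw [hS, Finset.mem_filter]; exact ⟨Finset.mem_univ _, hg⟩
    rw [← hST, hT, Finset.mem_image] at hgS
    obtain ⟨c, _, hc⟩ := hgS
    exact ⟨c, hc⟩
  refine ⟨QuotientGroup.mk (Φ ζ), ?_⟩
  have hpow1 : (QuotientGroup.mk (Φ ζ) :
      GL (Fin 2) F ⧸ Subgroup.center (GL (Fin 2) F)) ^ (q + 1) = 1 := by
    rw [← QuotientGroup.mk_pow, QuotientGroup.eq_one_iff, ← map_pow]
    rw [hker]
    apply hsol
    rw [← pow_mul, hqq, ← hζord]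
    exact pow_orderOf_eq_one ζ
  have hdvd : q + 1 ∣ orderOf (QuotientGroup.mk (Φ ζ) :
      GL (Fin 2) F ⧸ Subgroup.center (GL (Fin 2) F)) := by
    set k := orderOf (QuotientGroup.mk (Φ ζ) :
      GL (Fin 2) F ⧸ Subgroup.center (GL (Fin 2) F)) with hk
    have hk1 : (QuotientGroup.mk (Φ ζ) :
        GL (Fin 2) F ⧸ Subgroup.center (GL (Fin 2) F)) ^ k = 1 := pow_orderOf_eq_one _
    rw [← QuotientGroup.mk_pow, QuotientGroup.eq_one_iff, ← map_pow, hker] at hk1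
    obtain ⟨c, hc⟩ := hk1
    have h1 : ζ ^ (k * (q - 1)) = 1 := by
      rw [pow_mul, ← hc, ← map_pow]
      have : c ^ (q - 1) = 1 := by rw [← hcardU]; exact pow_card_eq_one
      rw [this, _root_.map_one]
    have h2 : (q ^ 2 - 1) ∣ k * (q - 1) := by
      rw [← hζord]; exact orderOf_dvd_of_pow_eq_one h1
    rw [← hqq] at h2
    exact (Nat.mul_dvd_mul_iff_right hq1pos).mp h2
  exact Nat.dvd_antisymm (orderOf_dvd_of_pow_eq_one hpow1) hdvd

/-- `PGL₂(F)`: the quotient of `GL₂(F)` by its center. -/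
abbrev PGL2 (F : Type*) [Field F] := GL (Fin 2) F ⧸ Subgroup.center (GL (Fin 2) F)

/-- If `F` is a finite field with `q` elements (`q` a prime power), then `PGL₂(F)` contains
an element of order `q - 1` and an element of order `q + 1`. -/
theorem PGL2_exists_elements_of_order (q : ℕ) (hq : IsPrimePow q)
    (F : Type*) [Field F] [Fintype F] (hF : Fintype.card F = q) :
    (∃ x : PGL2 F, orderOf x = q - 1) ∧ (∃ y : PGL2 F, orderOf y = q + 1) := by
  exact ⟨part1 q hq F hF, part2 q hq F hF⟩
end

section
/- Let q be a prime power, let F be a finite field with q elements, fix ε ∈ {1, −1} and an integer d ≥ 3 such that d divides q + ε, let A ∈ GL₂(F) be a matrix whose image in PGL₂(F) has order d, and let σ be the permutation of the projective line ℙ¹(F) induced by A. Then σ has exactly 1 − ε fixed points (that is, 2 fixed points if ε = −1 and none if ε = 1), every point of ℙ¹(F) that is not fixed by σ has minimal period exactly d under σ, and the number of σ-orbits of size d is (q + ε)/d. -/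
/-- The map induced on the projective line `ℙ¹(F)` by an invertible matrix `A ∈ GL₂(F)`,
given by applying the associated linear automorphism to representative vectors. -/
noncomputable def projAction {F : Type*} [Field F] (A : GL (Fin 2) F) :
    Projectivization F (Fin 2 → F) → Projectivization F (Fin 2 → F) :=
  Projectivization.map
    ((LinearMap.GeneralLinearGroup.generalLinearEquiv F (Fin 2 → F)
      (Matrix.GeneralLinearGroup.toLin A)) : (Fin 2 → F) →ₗ[F] (Fin 2 → F))
    (LinearMap.GeneralLinearGroup.generalLinearEquiv F (Fin 2 → F)
      (Matrix.GeneralLinearGroup.toLin A)).injective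

namespace PGL2Aux

open Matrix Projectivization

variable {F : Type*} [Field F]

lemma coe_toLin_apply (A : GL (Fin 2) F) (v : Fin 2 → F) :
    ((LinearMap.GeneralLinearGroup.generalLinearEquiv F (Fin 2 → F)
      (Matrix.GeneralLinearGroup.toLin A)) : (Fin 2 → F) →ₗ[F] (Fin 2 → F)) v
      = (A : Matrix (Fin 2) (Fin 2) F).mulVec v := by
  simp [Matrix.GeneralLinearGroup.toLin]

lemma mulVec_ne_zero (A : GL (Fin 2) F) {v : Fin 2 → F} (hv : v ≠ 0) :
    (A : Matrix (Fin 2) (Fin 2) F).mulVec v ≠ 0 := by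
  intro h
  apply hv
  have := (LinearMap.GeneralLinearGroup.generalLinearEquiv F (Fin 2 → F)
      (Matrix.GeneralLinearGroup.toLin A)).injective (a₁ := v) (a₂ := 0)
  simp only [map_zero] at this
  apply this
  rw [show ((LinearMap.GeneralLinearGroup.generalLinearEquiv F (Fin 2 → F)
      (Matrix.GeneralLinearGroup.toLin A)) : (Fin 2 → F) → (Fin 2 → F)) v
      = ((LinearMap.GeneralLinearGroup.generalLinearEquiv F (Fin 2 → F)
      (Matrix.GeneralLinearGroup.toLin A)) : (Fin 2 → F) →ₗ[F] (Fin 2 → F)) v from rfl,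
    coe_toLin_apply, h]

lemma projAction_mk (A : GL (Fin 2) F) {v : Fin 2 → F} (hv : v ≠ 0) :
    projAction A (Projectivization.mk F v hv)
      = Projectivization.mk F ((A : Matrix (Fin 2) (Fin 2) F).mulVec v) (mulVec_ne_zero A hv) := by
  rw [projAction, Projectivization.map_mk]
  simp_rw [coe_toLin_apply]

lemma projAction_mul (A B : GL (Fin 2) F) (x : Projectivization F (Fin 2 → F)) :
    projAction (A * B) x = projAction A (projAction B x) := by
  induction x using Projectivization.ind with
  | h v hv =>
    rw [projAction_mk, projAction_mk, projAction_mk]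
    simp_rw [Units.val_mul, ← Matrix.mulVec_mulVec]

lemma projAction_scalar {A : GL (Fin 2) F} {c : F}
    (h : (A : Matrix (Fin 2) (Fin 2) F) = c • 1) (x : Projectivization F (Fin 2 → F)) :
    projAction A x = x := by
  induction x using Projectivization.ind with
  | h v hv =>
    rw [projAction_mk]
    rw [Projectivization.mk_eq_mk_iff']
    refine ⟨c, ?_⟩
    rw [h, Matrix.smul_mulVec, Matrix.one_mulVec]

lemma indep_of_ne {v w : Fin 2 → F} (hv : v ≠ 0) (hw : w ≠ 0)
    (hne : Projectivization.mk F v hv ≠ Projectivization.mk F w hw) :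
    LinearIndependent F ![v, w] := by
  rw [linearIndependent_fin2]
  constructor
  · simpa using hw
  · intro a ha
    apply hne
    rw [Projectivization.mk_eq_mk_iff']
    exact ⟨a, by simpa using ha⟩

lemma fixed_iff (A : GL (Fin 2) F) {v : Fin 2 → F} (hv : v ≠ 0) :
    projAction A (Projectivization.mk F v hv) = Projectivization.mk F v hv
      ↔ ∃ a : F, (A : Matrix (Fin 2) (Fin 2) F).mulVec v = a • v := by
  rw [projAction_mk, Projectivization.mk_eq_mk_iff']
  constructor
  · rintro ⟨a, ha⟩; exact ⟨a, ha.symm⟩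
  · rintro ⟨a, ha⟩; exact ⟨a, ha.symm⟩

lemma eq_scalar_of_pair {B : Matrix (Fin 2) (Fin 2) F} {v w : Fin 2 → F} {c : F}
    (hli : LinearIndependent F ![v, w])
    (hv : B.mulVec v = c • v) (hw : B.mulVec w = c • w) :
    B = c • (1 : Matrix (Fin 2) (Fin 2) F) := by
  have hcard : Fintype.card (Fin 2) = Module.finrank F (Fin 2 → F) := by simp
  let b := basisOfLinearIndependentOfCardEqFinrank hli hcard
  have hb : ⇑b = ![v, w] := coe_basisOfLinearIndependentOfCardEqFinrank hli hcard
  apply Matrix.toLin'.injective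
  apply b.ext
  intro i
  fin_cases i <;>
    simp [hb, Matrix.toLin'_apply, hv, hw, Matrix.smul_mulVec, Matrix.one_mulVec]

lemma scalar_of_three_lines {B : Matrix (Fin 2) (Fin 2) F} {v w u : Fin 2 → F}
    (hli : LinearIndependent F ![v, w])
    (h1 : ¬∃ t : F, t • v = u) (h2 : ¬∃ t : F, t • w = u)
    {a c e : F} (hv : B.mulVec v = a • v) (hw : B.mulVec w = c • w)
    (hue : B.mulVec u = e • u) :
    B = a • (1 : Matrix (Fin 2) (Fin 2) F) := by
  have hcard : Fintype.card (Fin 2) = Module.finrank F (Fin 2 → F) := by simp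
  let b := basisOfLinearIndependentOfCardEqFinrank hli hcard
  have hb : ⇑b = ![v, w] := coe_basisOfLinearIndependentOfCardEqFinrank hli hcard
  have hsum := b.sum_repr u
  rw [Fin.sum_univ_two] at hsum
  set r0 := b.repr u 0 with hr0
  set r1 := b.repr u 1 with hr1
  have hb0 : b 0 = v := by rw [show b 0 = ⇑b 0 from rfl, hb]; rfl
  have hb1 : b 1 = w := by rw [show b 1 = ⇑b 1 from rfl, hb]; rfl
  rw [hb0, hb1] at hsum
  have hr0ne : r0 ≠ 0 := by
    intro h
    rw [h, zero_smul, zero_add] at hsum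
    exact h2 ⟨r1, hsum⟩
  have hr1ne : r1 ≠ 0 := by
    intro h
    rw [h, zero_smul, add_zero] at hsum
    exact h1 ⟨r0, hsum⟩
  have key : (r0 * a - e * r0) • v + (r1 * c - e * r1) • w = 0 := by
    have h3 : B.mulVec (r0 • v + r1 • w) = e • (r0 • v + r1 • w) := by
      rw [hsum, hue]
    rw [Matrix.mulVec_add, Matrix.mulVec_smul, Matrix.mulVec_smul, hv, hw] at h3
    linear_combination (norm := module) h3
  have hcoef := Fintype.linearIndependent_iff.mp hli ![r0 * a - e * r0, r1 * c - e * r1] ?_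
  · have c0 := hcoef 0
    have c1 := hcoef 1
    simp only [Matrix.cons_val_zero, Matrix.cons_val_one, Matrix.head_cons] at c0 c1
    have hae : a = e := by
      have h' : r0 * (a - e) = 0 := by linear_combination c0
      exact sub_eq_zero.mp ((mul_eq_zero.mp h').resolve_left hr0ne)
    have hce : c = e := by
      have h' : r1 * (c - e) = 0 := by linear_combination c1
      exact sub_eq_zero.mp ((mul_eq_zero.mp h').resolve_left hr1ne)
    have : B.mulVec w = a • w := by rw [hw, hce, hae]
    exact eq_scalar_of_pair hli hv this
  · rw [Fin.sum_univ_two]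
    simpa using key

lemma scalar_of_mem_center {B : GL (Fin 2) F} (h : B ∈ Subgroup.center (GL (Fin 2) F)) :
    ∃ c : F, (B : Matrix (Fin 2) (Fin 2) F) = c • 1 := by
  have : (B : Matrix (Fin 2) (Fin 2) F) ∈ Set.range (Matrix.scalar (Fin 2)) := by
    apply Matrix.mem_range_scalar_of_commute_transvectionStruct
    intro t
    have hu : IsUnit t.toMatrix := by
      apply (Matrix.isUnit_iff_isUnit_det _).mpr
      simp [t.det]
    have := Subgroup.mem_center_iff.mp h hu.unit
    have := congrArg (fun (g : GL (Fin 2) F) => (g : Matrix (Fin 2) (Fin 2) F)) this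
    simpa [Commute, SemiconjBy] using this
  obtain ⟨c, hc⟩ := this
  exact ⟨c, by rw [← hc]; simp [Matrix.scalar_apply, Matrix.smul_one_eq_diagonal]⟩

lemma mem_center_of_scalar {B : GL (Fin 2) F} {c : F}
    (h : (B : Matrix (Fin 2) (Fin 2) F) = c • 1) : B ∈ Subgroup.center (GL (Fin 2) F) := by
  rw [Subgroup.mem_center_iff]
  intro g
  have : (g : Matrix (Fin 2) (Fin 2) F) * B = (B : Matrix (Fin 2) (Fin 2) F) * g := by
    rw [h, Matrix.mul_smul, Matrix.smul_mul, Matrix.mul_one, Matrix.one_mul]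
  exact Units.ext this

private lemma vne0 : (![1, 0] : Fin 2 → F) ≠ 0 := by
  intro h; have := congrFun h 0; simp at this

private lemma vne1 (a : F) : (![a, 1] : Fin 2 → F) ≠ 0 := by
  intro h; have := congrFun h 1; simp at this

open Classical in
noncomputable def projEquivOption : Projectivization F (Fin 2 → F) ≃ Option F where
  toFun := Projectivization.lift
    (fun v => if v.1 1 = 0 then none else some (v.1 0 / v.1 1))
    (by
      rintro ⟨v, hv⟩ ⟨w, hw⟩ t (rfl : v = t • w)
      have ht : t ≠ 0 := by rintro rfl; simp at hv
      by_cases h : w 1 = 0 <;>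
        simp [h, Pi.smul_apply, smul_eq_mul, ht, mul_div_mul_left _ _ ht])
  invFun := fun o => o.elim (Projectivization.mk F ![1, 0] vne0)
    (fun a => Projectivization.mk F ![a, 1] (vne1 a))
  left_inv := by
    intro x
    induction x using Projectivization.ind with
    | h v hv =>
      rw [Projectivization.lift_mk]
      by_cases h : v 1 = 0
      · have h0 : v 0 ≠ 0 := by
          intro h0
          apply hv
          funext i
          fin_cases i <;> simp [h, h0]
        rw [if_pos h]
        simp only [Option.elim]
        rw [Projectivization.mk_eq_mk_iff']
        refine ⟨(v 0)⁻¹, ?_⟩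
        funext i
        fin_cases i <;> simp [h, inv_mul_cancel₀ h0]
      · rw [if_neg h]
        simp only [Option.elim]
        rw [Projectivization.mk_eq_mk_iff']
        refine ⟨(v 1)⁻¹, ?_⟩
        funext i
        fin_cases i <;> simp [inv_mul_cancel₀ h, div_eq_inv_mul]
  right_inv := by
    rintro (_ | a) <;> simp only [Option.elim] <;> rw [Projectivization.lift_mk] <;> simp

end PGL2Aux

open PGL2Aux Projectivization in
/-- Let `F` be a finite field with `q` elements (`q` a prime power), `ε = ±1`, `d ≥ 3` with
`d ∣ q + ε`, and let `A ∈ GL₂(F)` be a matrix whose image in `PGL₂(F)` has order `d`.  Then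
the permutation `σ` of the projective line induced by `A` has exactly `1 - ε` fixed points,
every non-fixed point has minimal period exactly `d` under `σ`, and the number of `σ`-orbits
of size `d` is `(q + ε) / d`. -/
theorem PGL2_orbit_structure_on_projective_line (q : ℕ) (hq : IsPrimePow q)
    (F : Type*) [Field F] [Fintype F] (hF : Fintype.card F = q)
    (ε : ℤ) (hε : ε = 1 ∨ ε = -1) (d : ℕ) (hd : 3 ≤ d) (hdvd : (d : ℤ) ∣ (q : ℤ) + ε)
    (A : GL (Fin 2) F) (hA : orderOf (QuotientGroup.mk A : PGL2 F) = d)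
    (σ : Equiv.Perm (Projectivization F (Fin 2 → F)))
    (hσ : ∀ x : Projectivization F (Fin 2 → F), σ x = projAction A x) :
    (Nat.card {x : Projectivization F (Fin 2 → F) // σ x = x} : ℤ) = 1 - ε ∧
    (∀ x : Projectivization F (Fin 2 → F), σ x ≠ x →
      Function.minimalPeriod (⇑σ) x = d) ∧
    (Nat.card {s : Set (Projectivization F (Fin 2 → F)) //
        (∃ x, s = Set.range fun n : ℤ => (σ ^ n) x) ∧ Nat.card s = d} : ℤ) * (d : ℤ) =
      (q : ℤ) + ε := by
  classical
  have e : Projectivization F (Fin 2 → F) ≃ Option F := projEquivOption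
  have hfinT : Finite (Projectivization F (Fin 2 → F)) := Finite.of_equiv _ e.symm
  have instT : Fintype (Projectivization F (Fin 2 → F)) := Fintype.ofFinite _
  have hcardT : Fintype.card (Projectivization F (Fin 2 → F)) = q + 1 := by
    rw [Fintype.card_congr e, Fintype.card_option, hF]
  have hd0 : 0 < d := by omega
  -- powers of σ act as powers of A
  have hpow : ∀ (n : ℕ) (x : Projectivization F (Fin 2 → F)),
      (σ ^ n) x = projAction (A ^ n) x := by
    intro n
    induction n with
    | zero =>
      intro x
      rw [pow_zero, pow_zero]
      exact (projAction_scalar (c := 1) (by simp) x).symm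
    | succ n ih =>
      intro x
      rw [pow_succ, Equiv.Perm.mul_apply, ih, hσ, ← projAction_mul, ← pow_succ]
  -- scalarity of powers of A
  have hcen : ∀ k : ℕ, ((QuotientGroup.mk (A ^ k) : PGL2 F) = 1) ↔ (d ∣ k) := by
    intro k
    rw [QuotientGroup.mk_pow, ← hA]
    exact orderOf_dvd_iff_pow_eq_one.symm
  have hscal : ∀ k : ℕ,
      (∃ c : F, ((A ^ k : GL (Fin 2) F) : Matrix (Fin 2) (Fin 2) F) = c • 1) ↔ d ∣ k := by
    intro k
    constructor
    · rintro ⟨c, hc⟩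
      exact (hcen k).mp ((QuotientGroup.eq_one_iff _).mpr (mem_center_of_scalar hc))
    · intro hk
      exact scalar_of_mem_center ((QuotientGroup.eq_one_iff _).mp ((hcen k).mpr hk))
  have hσd : σ ^ d = 1 := by
    ext x
    obtain ⟨c, hc⟩ := (hscal d).mpr dvd_rfl
    rw [hpow d x, projAction_scalar hc x]
    rfl
  have hperiodic : ∀ x, Function.IsPeriodicPt (⇑σ) d x := by
    intro x
    show σ^[d] x = x
    rw [Equiv.Perm.iterate_eq_pow, hσd]
    rfl
  -- no non-scalar power fixes three distinct points
  have key3 : ∀ k : ℕ, 0 < k → k < d → ∀ x y z : Projectivization F (Fin 2 → F),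
      x ≠ y → x ≠ z → y ≠ z →
      (σ ^ k) x = x → (σ ^ k) y = y → (σ ^ k) z = z → False := by
    intro k hk1 hk2 x y z hxy hxz hyz hx hy hz
    rw [hpow] at hx hy hz
    obtain ⟨a, ha⟩ := (fixed_iff (A ^ k) x.rep_nonzero).mp (by rw [x.mk_rep]; exact hx)
    obtain ⟨c, hc⟩ := (fixed_iff (A ^ k) y.rep_nonzero).mp (by rw [y.mk_rep]; exact hy)
    obtain ⟨ee, he⟩ := (fixed_iff (A ^ k) z.rep_nonzero).mp (by rw [z.mk_rep]; exact hz)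
    have hli : LinearIndependent F ![x.rep, y.rep] :=
      indep_of_ne x.rep_nonzero y.rep_nonzero (by rw [x.mk_rep, y.mk_rep]; exact hxy)
    have h1 : ¬∃ t : F, t • x.rep = z.rep := by
      rintro ⟨t, ht⟩
      apply hxz
      have : Projectivization.mk F z.rep z.rep_nonzero
          = Projectivization.mk F x.rep x.rep_nonzero := by
        rw [Projectivization.mk_eq_mk_iff']
        exact ⟨t, ht⟩
      rw [x.mk_rep, z.mk_rep] at this
      exact this.symm
    have h2 : ¬∃ t : F, t • y.rep = z.rep := by
      rintro ⟨t, ht⟩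
      apply hyz
      have : Projectivization.mk F z.rep z.rep_nonzero
          = Projectivization.mk F y.rep y.rep_nonzero := by
        rw [Projectivization.mk_eq_mk_iff']
        exact ⟨t, ht⟩
      rw [y.mk_rep, z.mk_rep] at this
      exact this.symm
    have hsc := scalar_of_three_lines hli h1 h2 ha hc he
    have := (hscal k).mp ⟨a, hsc⟩
    have := Nat.le_of_dvd hk1 this
    omega
  -- every non-fixed point has minimal period exactly d
  have hmin : ∀ x : Projectivization F (Fin 2 → F), σ x ≠ x →
      Function.minimalPeriod (⇑σ) x = d := by
    intro x hx
    set m := Function.minimalPeriod (⇑σ) x with hm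
    have hdvd' : m ∣ d := (hperiodic x).minimalPeriod_dvd
    have hmpos : 0 < m := (hperiodic x).minimalPeriod_pos hd0
    have hm1 : m ≠ 1 := by
      intro h
      exact hx (Function.minimalPeriod_eq_one_iff_isFixedPt.mp (hm ▸ h))
    by_contra hne
    have hmd : m < d := lt_of_le_of_ne (Nat.le_of_dvd hd0 hdvd') hne
    have hitm : σ^[m] x = x := by rw [hm]; exact Function.iterate_minimalPeriod
    rcases eq_or_ne m 2 with h2 | h2
    · -- period 2 : A² is scalar, contradiction
      have hit2 : σ^[2] x = x := by
        have h' := hitm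
        rw [h2] at h'
        exact h'
      have hfix2 : projAction (A ^ 2) x = x := by
        rw [← hpow 2 x]
        rw [← Equiv.Perm.iterate_eq_pow]; exact hit2
      obtain ⟨a, ha⟩ := (fixed_iff (A ^ 2) x.rep_nonzero).mp (by rw [x.mk_rep]; exact hfix2)
      have hsx : σ x = Projectivization.mk F ((A : Matrix (Fin 2) (Fin 2) F).mulVec x.rep)
          (mulVec_ne_zero A x.rep_nonzero) := by
        conv_lhs => rw [hσ, ← x.mk_rep]
        rw [projAction_mk]
      have hli : LinearIndependent F ![x.rep, (A : Matrix (Fin 2) (Fin 2) F).mulVec x.rep] := by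
        apply indep_of_ne x.rep_nonzero (mulVec_ne_zero A x.rep_nonzero)
        rw [x.mk_rep, ← hsx]
        exact Ne.symm hx
      have hcomm : ((A ^ 2 : GL (Fin 2) F) : Matrix (Fin 2) (Fin 2) F)
            * (A : Matrix (Fin 2) (Fin 2) F)
          = (A : Matrix (Fin 2) (Fin 2) F)
            * ((A ^ 2 : GL (Fin 2) F) : Matrix (Fin 2) (Fin 2) F) := by
        rw [← Units.val_mul, ← Units.val_mul, ← pow_succ, ← pow_succ']
      have hb : ((A ^ 2 : GL (Fin 2) F) : Matrix (Fin 2) (Fin 2) F).mulVec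
            ((A : Matrix (Fin 2) (Fin 2) F).mulVec x.rep)
          = a • ((A : Matrix (Fin 2) (Fin 2) F).mulVec x.rep) := by
        rw [Matrix.mulVec_mulVec, hcomm, ← Matrix.mulVec_mulVec, ha, Matrix.mulVec_smul]
      have hsc := eq_scalar_of_pair hli ha hb
      have := Nat.le_of_dvd (by omega) ((hscal 2).mp ⟨a, hsc⟩)
      omega
    · -- m ≥ 3 : three distinct points fixed by σ^m
      have h3m : 3 ≤ m := by omega
      have hinj := Function.iterate_injOn_Iio_minimalPeriod (f := ⇑σ) (x := x)
      rw [← hm] at hinj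
      have hfm : (σ ^ m) x = x := by rw [← Equiv.Perm.iterate_eq_pow]; exact hitm
      have hf : ∀ j : ℕ, (σ ^ m) ((σ ^ j) x) = (σ ^ j) x := by
        intro j
        rw [← Equiv.Perm.mul_apply, pow_mul_comm, Equiv.Perm.mul_apply, hfm]
      have hne01 : x ≠ σ x := Ne.symm hx
      have hne02 : x ≠ (σ ^ 2) x := by
        intro h
        have := hinj (Set.mem_Iio.mpr (by omega : (0:ℕ) < m))
          (Set.mem_Iio.mpr (by omega : (2:ℕ) < m))
          (h : (⇑σ)^[0] x = (⇑σ)^[2] x)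
        omega
      have hne12 : σ x ≠ (σ ^ 2) x := by
        intro h
        have := hinj (Set.mem_Iio.mpr (by omega : (1:ℕ) < m))
          (Set.mem_Iio.mpr (by omega : (2:ℕ) < m))
          (h : (⇑σ)^[1] x = (⇑σ)^[2] x)
        omega
      exact key3 m hmpos hmd x (σ x) ((σ ^ 2) x) hne01 hne02 hne12
        hfm (by simpa [pow_one] using hf 1) (hf 2)
  -- ### counting ###
  let Fx : Finset (Projectivization F (Fin 2 → F)) := Finset.univ.filter (fun x => σ x = x)
  have hfixcard : Nat.card {x : (Projectivization F (Fin 2 → F)) // σ x = x} = Fx.card := by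
    rw [Nat.card_eq_fintype_card, Fintype.card_subtype]
  have hfle : Fx.card ≤ 2 := by
    by_contra h
    push_neg at h
    obtain ⟨x, y, z, hxm, hym, hzm, hxy, hxz, hyz⟩ := Finset.two_lt_card_iff.mp h
    have fx := (Finset.mem_filter.mp hxm).2
    have fy := (Finset.mem_filter.mp hym).2
    have fz := (Finset.mem_filter.mp hzm).2
    exact key3 1 (by omega) (by omega) x y z hxy hxz hyz
      (by rwa [pow_one]) (by rwa [pow_one]) (by rwa [pow_one])
  let orbF : (Projectivization F (Fin 2 → F)) → Finset (Projectivization F (Fin 2 → F)) := fun x => (Finset.range d).image (fun k => (σ ^ k) x)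
  have hpow_mod : ∀ (n : ℕ) (x : (Projectivization F (Fin 2 → F))), (σ ^ n) x = (σ ^ (n % d)) x := by
    intro n x
    conv_lhs => rw [← Nat.div_add_mod n d]
    rw [pow_add, pow_mul, hσd, one_pow, one_mul]
  have horb_mem : ∀ (x : (Projectivization F (Fin 2 → F))) (k : ℕ), (σ ^ k) x ∈ orbF x := by
    intro x k
    refine Finset.mem_image.mpr ⟨k % d, Finset.mem_range.mpr (Nat.mod_lt _ hd0), ?_⟩
    rw [← hpow_mod]
  have horb_mem_self : ∀ x : (Projectivization F (Fin 2 → F)), x ∈ orbF x := by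
    intro x
    have := horb_mem x 0
    simpa using this
  have horb_eq : ∀ x y : (Projectivization F (Fin 2 → F)), y ∈ orbF x → orbF y = orbF x := by
    intro x y hy
    obtain ⟨j, hj, rfl⟩ := Finset.mem_image.mp hy
    apply Finset.Subset.antisymm
    · intro z hz
      obtain ⟨k, hk, rfl⟩ := Finset.mem_image.mp hz
      rw [← Equiv.Perm.mul_apply, ← pow_add]
      exact horb_mem x (k + j)
    · intro z hz
      obtain ⟨k, hk, rfl⟩ := Finset.mem_image.mp hz
      have hrw : (σ ^ (k + (d - j))) ((σ ^ j) x) = (σ ^ k) x := by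
        rw [← Equiv.Perm.mul_apply, ← pow_add]
        have hjd : k + (d - j) + j = k + d := by
          rw [Finset.mem_range] at hj
          omega
        rw [hjd, pow_add, hσd, mul_one]
      rw [← hrw]
      exact horb_mem _ _
  have horb_fixed : ∀ x : (Projectivization F (Fin 2 → F)), σ x = x → orbF x = {x} := by
    intro x hx
    apply Finset.Subset.antisymm
    · intro z hz
      obtain ⟨k, hk, rfl⟩ := Finset.mem_image.mp hz
      have hfix : ∀ n : ℕ, (σ ^ n) x = x := by
        intro n
        induction n with
        | zero => simp
        | succ n ih => rw [pow_succ, Equiv.Perm.mul_apply, hx, ih]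
      simp [hfix k]
    · intro z hz
      rw [Finset.mem_singleton] at hz
      rw [hz]
      exact horb_mem_self x
  have horb_card : ∀ x : (Projectivization F (Fin 2 → F)), σ x ≠ x → (orbF x).card = d := by
    intro x hx
    have hinj2 : Set.InjOn (fun k => (σ ^ k) x) ↑(Finset.range d) := by
      intro i hi j hj hij
      rw [Finset.mem_coe, Finset.mem_range] at hi hj
      have hinj := Function.iterate_injOn_Iio_minimalPeriod (f := ⇑σ) (x := x)
      rw [hmin x hx] at hinj
      exact hinj (Set.mem_Iio.mpr hi) (Set.mem_Iio.mpr hj)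
        (hij : (⇑σ)^[i] x = (⇑σ)^[j] x)
    rw [Finset.card_image_of_injOn hinj2, Finset.card_range]
  have horb_nonfixed : ∀ x : (Projectivization F (Fin 2 → F)), σ x ≠ x → ∀ y ∈ orbF x, σ y ≠ y := by
    intro x hx y hy hfix
    have h1 : orbF y = orbF x := horb_eq x y hy
    have h2 : orbF y = {y} := horb_fixed y hfix
    have hxy : x ∈ ({y} : Finset (Projectivization F (Fin 2 → F))) := by
      rw [← h2, h1]
      exact horb_mem_self x
    rw [Finset.mem_singleton] at hxy
    exact hx (hxy ▸ hfix)
  have horb_set : ∀ x : (Projectivization F (Fin 2 → F)), (Set.range fun n : ℤ => (σ ^ n) x) = ↑(orbF x) := by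
    intro x
    ext y
    simp only [Set.mem_range, Finset.mem_coe]
    constructor
    · rintro ⟨n, rfl⟩
      have hd' : (d : ℤ) ≠ 0 := by exact_mod_cast hd0.ne'
      have hmod : ((n % (d : ℤ)).toNat : ℤ) = n % (d : ℤ) :=
        Int.toNat_of_nonneg (Int.emod_nonneg n hd')
      have hz : σ ^ n = σ ^ ((n % (d : ℤ)).toNat) := by
        calc σ ^ n = σ ^ ((d : ℤ) * (n / (d : ℤ)) + n % (d : ℤ)) := by
              rw [Int.mul_ediv_add_emod]
          _ = (σ ^ (d : ℤ)) ^ (n / (d : ℤ)) * σ ^ (n % (d : ℤ)) := by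
              rw [_root_.zpow_add, _root_.zpow_mul]
          _ = σ ^ (n % (d : ℤ)) := by
              rw [zpow_natCast, hσd, one_zpow, one_mul]
          _ = σ ^ ((n % (d : ℤ)).toNat) := by
              rw [← zpow_natCast, hmod]
      rw [hz]
      exact horb_mem x _
    · intro hy
      obtain ⟨k, hk, rfl⟩ := Finset.mem_image.mp hy
      exact ⟨(k : ℤ), by rw [zpow_natCast]⟩
  let s : Finset (Projectivization F (Fin 2 → F)) := Finset.univ.filter (fun x => ¬ σ x = x)
  let t : Finset (Set (Projectivization F (Fin 2 → F))) := s.image (fun x => (↑(orbF x) : Set (Projectivization F (Fin 2 → F))))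
  have hfibers : ∀ a ∈ t, (s.filter (fun x => (↑(orbF x) : Set (Projectivization F (Fin 2 → F))) = a)).card = d := by
    intro a ha
    obtain ⟨x₀, hx₀s, rfl⟩ := Finset.mem_image.mp ha
    have hx₀ : σ x₀ ≠ x₀ := (Finset.mem_filter.mp hx₀s).2
    have hfe : s.filter (fun x => (↑(orbF x) : Set (Projectivization F (Fin 2 → F))) = ↑(orbF x₀)) = orbF x₀ := by
      apply Finset.Subset.antisymm
      · intro x hxm
        obtain ⟨hxs, heq⟩ := Finset.mem_filter.mp hxm
        have heq' : orbF x = orbF x₀ := Finset.coe_injective heq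
        rw [← heq']
        exact horb_mem_self x
      · intro x hxm
        refine Finset.mem_filter.mpr ⟨?_, ?_⟩
        · exact Finset.mem_filter.mpr ⟨Finset.mem_univ x, horb_nonfixed x₀ hx₀ x hxm⟩
        · rw [horb_eq x₀ x hxm]
    rw [hfe, horb_card x₀ hx₀]
  have hcount : s.card = t.card * d := by
    rw [Finset.card_eq_sum_card_fiberwise
      (fun x hx => Finset.mem_image_of_mem (fun x => (↑(orbF x) : Set (Projectivization F (Fin 2 → F)))) hx)]
    rw [Finset.sum_congr rfl hfibers, Finset.sum_const, smul_eq_mul]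
  have hSset : {s₀ : Set (Projectivization F (Fin 2 → F)) | (∃ x, s₀ = Set.range fun n : ℤ => (σ ^ n) x) ∧ Nat.card s₀ = d}
      = ↑t := by
    ext a
    simp only [Set.mem_setOf_eq, Finset.mem_coe]
    constructor
    · rintro ⟨⟨x, rfl⟩, hcard⟩
      rw [horb_set x] at hcard ⊢
      rw [Nat.card_coe_set_eq, Set.ncard_coe_finset] at hcard
      have hx : σ x ≠ x := by
        intro h
        rw [horb_fixed x h, Finset.card_singleton] at hcard
        omega
      exact Finset.mem_image_of_mem _ (Finset.mem_filter.mpr ⟨Finset.mem_univ x, hx⟩)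
    · intro ha
      obtain ⟨x, hxs, rfl⟩ := Finset.mem_image.mp ha
      have hx : σ x ≠ x := (Finset.mem_filter.mp hxs).2
      refine ⟨⟨x, (horb_set x).symm⟩, ?_⟩
      rw [Nat.card_coe_set_eq, Set.ncard_coe_finset, horb_card x hx]
  have hScard : Nat.card {s₀ : Set (Projectivization F (Fin 2 → F)) //
      (∃ x, s₀ = Set.range fun n : ℤ => (σ ^ n) x) ∧ Nat.card s₀ = d} = t.card := by
    have h1 : Nat.card ({s₀ : Set (Projectivization F (Fin 2 → F)) |
        (∃ x, s₀ = Set.range fun n : ℤ => (σ ^ n) x) ∧ Nat.card s₀ = d} : Set (Set (Projectivization F (Fin 2 → F))))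
        = Nat.card ((↑t : Set (Set (Projectivization F (Fin 2 → F))))) := by rw [hSset]
    simp only [Nat.card_coe_set_eq, Set.ncard_coe_finset] at h1
    exact h1
  have hsplit : Fx.card + s.card = q + 1 := by
    have := Finset.card_filter_add_card_filter_not
      (s := (Finset.univ : Finset (Projectivization F (Fin 2 → F)))) (p := fun x => σ x = x)
    rw [Finset.card_univ, hcardT] at this
    exact this
  -- final arithmetic
  have hsplitZ : (Fx.card : ℤ) + (t.card : ℤ) * (d : ℤ) = (q : ℤ) + 1 := by
    have : (Fx.card : ℤ) + (s.card : ℤ) = (q : ℤ) + 1 := by exact_mod_cast hsplit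
    rw [show ((s.card : ℤ)) = (t.card : ℤ) * (d : ℤ) by exact_mod_cast hcount] at this
    exact this
  obtain ⟨k, hk⟩ := hdvd
  have hzero : (Fx.card : ℤ) - (1 - ε) = 0 := by
    apply Int.eq_zero_of_abs_lt_dvd (m := (d : ℤ))
    · exact ⟨k - (t.card : ℤ), by linear_combination hsplitZ + hk⟩
    · have h0' : (0:ℤ) ≤ (Fx.card : ℤ) := Int.ofNat_nonneg _
      have h2' : (Fx.card : ℤ) ≤ 2 := by exact_mod_cast hfle
      have hd3 : (3:ℤ) ≤ (d:ℤ) := by exact_mod_cast hd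
      rcases hε with rfl | rfl <;> (rw [abs_lt]; constructor) <;> omega
  refine ⟨?_, hmin, ?_⟩
  · rw [hfixcard]
    omega
  · rw [hScard]
    omega
end
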